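/- Let N be a positive natural number, M ∈ ℝᴺˣᴺ a symmetric positive definite matrix, G : ℝᴺ → ℝᴺˣᴺ a matrix-valued map such that G(a) is symmetric positive semi-definite for every a ∈ ℝᴺ, and S : ℝᴺ → ℝ differentiable. Suppose a : ℝ → ℝᴺ is differentiable and c : ℝ → ℝᴺ satisfies, for all t, M a'(t) = G(a(t)) c(t) and M c(t) = ∇S(a(t)). Then a'(t) = Ĝ(a(t)) ∇S(a(t)) with Ĝ(a) := M⁻¹ G(a) M⁻¹, the derivative of the discrete entropy satisfies d/dt S(a(t)) = ∇S(a(t)) · (Ĝ(a(t)) ∇S(a(t))) ≥ 0, and hence t ↦ S(a(t)) is monotone nondecreasing. -/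

import Mathlib

open Matrix

/-- Let `M` be symmetric positive definite, `G(a)` symmetric positive
semi-definite for all `a`, and `S` differentiable. If `a, c : ℝ → ℝᴺ` satisfy
`M a'(t) = G(a(t)) c(t)`, `M c(t) = ∇S(a(t))`, then `a'(t) = Ĝ(a(t)) ∇S(a(t))` with
`Ĝ(a) = M⁻¹ G(a) M⁻¹`, the derivative of the discrete entropy is
`d/dt S(a(t)) = ∇S(a(t)) · (Ĝ(a(t)) ∇S(a(t))) ≥ 0`, and `t ↦ S(a(t))` is monotone
nondecreasing. -/
theorem stmt_8 (N : ℕ) (hN : 0 < N)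
    (M : Matrix (Fin N) (Fin N) ℝ) (hM : M.PosDef)
    (G : EuclideanSpace ℝ (Fin N) → Matrix (Fin N) (Fin N) ℝ)
    (hG : ∀ x, (G x).PosSemidef)
    (S : EuclideanSpace ℝ (Fin N) → ℝ) (hS : Differentiable ℝ S)
    (a a' c : ℝ → EuclideanSpace ℝ (Fin N))
    (ha : ∀ t : ℝ, HasDerivAt a (a' t) t)
    (h1 : ∀ t : ℝ, M.mulVec (a' t) = (G (a t)).mulVec (c t))
    (h2 : ∀ t : ℝ, M.mulVec (c t) = (gradient S (a t) : EuclideanSpace ℝ (Fin N))) :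
    (∀ t : ℝ, a' t =
        (M⁻¹ * G (a t) * M⁻¹).mulVec (gradient S (a t) : EuclideanSpace ℝ (Fin N))) ∧
    (∀ t : ℝ, HasDerivAt (fun τ => S (a τ))
        ((gradient S (a t) : EuclideanSpace ℝ (Fin N)) ⬝ᵥ
          (M⁻¹ * G (a t) * M⁻¹).mulVec (gradient S (a t) : EuclideanSpace ℝ (Fin N))) t ∧
      0 ≤ (gradient S (a t) : EuclideanSpace ℝ (Fin N)) ⬝ᵥ
          (M⁻¹ * G (a t) * M⁻¹).mulVec (gradient S (a t) : EuclideanSpace ℝ (Fin N))) ∧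
    Monotone fun t => S (a t) := by
  have hdet : IsUnit M.det := isUnit_iff_ne_zero.mpr hM.det_pos.ne'
  have hcancel : ∀ v : Fin N → ℝ, M⁻¹.mulVec (M.mulVec v) = v := by
    intro v
    rw [Matrix.mulVec_mulVec, Matrix.nonsing_inv_mul M hdet, Matrix.one_mulVec]
  have hMinvH : M⁻¹ᴴ = M⁻¹ := by
    rw [conjTranspose_nonsing_inv, hM.1.eq]
  have part1 : ∀ t : ℝ, a' t =
      (M⁻¹ * G (a t) * M⁻¹).mulVec (gradient S (a t) : EuclideanSpace ℝ (Fin N)) := by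
    intro t
    have hc : (c t : Fin N → ℝ) = M⁻¹.mulVec ((gradient S (a t) : EuclideanSpace ℝ (Fin N))) := by
      rw [← h2 t, hcancel]
    calc (a' t : Fin N → ℝ) = M⁻¹.mulVec (M.mulVec (a' t)) := (hcancel _).symm
      _ = M⁻¹.mulVec ((G (a t)).mulVec (M⁻¹.mulVec ((gradient S (a t) : EuclideanSpace ℝ (Fin N))))) := by
          rw [h1 t, hc]
      _ = (M⁻¹ * G (a t) * M⁻¹).mulVec ((gradient S (a t) : EuclideanSpace ℝ (Fin N))) := by
          rw [Matrix.mulVec_mulVec, Matrix.mulVec_mulVec]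
  have hps : ∀ t : ℝ, (M⁻¹ * G (a t) * M⁻¹).PosSemidef := by
    intro t
    have := (hG (a t)).mul_mul_conjTranspose_same M⁻¹
    rwa [hMinvH] at this
  have nonneg : ∀ t : ℝ, 0 ≤ (gradient S (a t) : EuclideanSpace ℝ (Fin N)) ⬝ᵥ
      (M⁻¹ * G (a t) * M⁻¹).mulVec (gradient S (a t) : EuclideanSpace ℝ (Fin N)) := by
    intro t
    have := (hps t).dotProduct_mulVec_nonneg ((gradient S (a t) : EuclideanSpace ℝ (Fin N)))
    simpa using this
  have hderiv : ∀ t : ℝ, HasDerivAt (fun τ => S (a τ))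
      ((gradient S (a t) : EuclideanSpace ℝ (Fin N)) ⬝ᵥ
        (M⁻¹ * G (a t) * M⁻¹).mulVec (gradient S (a t) : EuclideanSpace ℝ (Fin N))) t := by
    intro t
    have hg : HasGradientAt S ((gradient S (a t) : EuclideanSpace ℝ (Fin N))) (a t) := (hS (a t)).hasGradientAt
    have hd := hg.hasFDerivAt.comp_hasDerivAt t (ha t)
    have heq : (inner ℝ ((gradient S (a t) : EuclideanSpace ℝ (Fin N))) (a' t) : ℝ) =
        (gradient S (a t) : EuclideanSpace ℝ (Fin N)) ⬝ᵥ
          (M⁻¹ * G (a t) * M⁻¹).mulVec (gradient S (a t) : EuclideanSpace ℝ (Fin N)) := by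
      rw [← part1 t]
      rw [PiLp.inner_apply]
      simp [PiLp.inner_apply, dotProduct, RCLike.inner_apply, mul_comm]
    rw [InnerProductSpace.toDual_apply_apply, heq] at hd
    exact hd
  refine ⟨part1, fun t => ⟨hderiv t, nonneg t⟩, ?_⟩
  exact monotone_of_deriv_nonneg (fun t => (hderiv t).differentiableAt)
    (fun t => by rw [(hderiv t).deriv]; exact nonneg t)
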